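/- Let X be a real Banach space and r ∈ [0,2]. Suppose that for every δ > 0 there exist a real Banach space Y and a continuous linear bijection L : X → Y with continuous inverse such that ‖L‖·‖L^{-1}‖ < 1 + δ and 𝒯^s(Y) = r. Then 𝒯^s(X) ≥ r. -/

import Mathlib

open Metric Set

noncomputable section

variable (X : Type*) [NormedAddCommGroup X] [NormedSpace ℝ X]

/-- A subset `U` of `X` is weakly open if it is open in the weak topology of `X`. -/
def IsWeaklyOpen (U : Set X) : Prop := IsOpen (toWeakSpace ℝ X '' U)

/-- The slice `S(B_X, f, α) = {x ∈ B_X : f x > 1 - α}` of the closed unit ball of `X`. -/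
def sliceSet (f : X →L[ℝ] ℝ) (α : ℝ) : Set X :=
  {y ∈ closedBall (0 : X) 1 | 1 - α < f y}

/-- `S` is a slice of the closed unit ball of `X`, i.e. `S = S(B_X, f, α)` for some norm-one
functional `f` and some `α > 0`. -/
def IsSlice (S : Set X) : Prop :=
  ∃ f : X →L[ℝ] ℝ, ‖f‖ = 1 ∧ ∃ α > (0 : ℝ), S = sliceSet X f α

/-- The Daugavet index of thickness `𝒯ˢ(X)`: the infimum of all `r > 0` such that some slice of
the closed unit ball is contained in a closed ball of radius `r` centered at a point of the unit
sphere. -/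
def Ts : ℝ :=
  sInf {r : ℝ | 0 < r ∧ ∃ x : X, ‖x‖ = 1 ∧ ∃ S : Set X, IsSlice X S ∧ S ⊆ closedBall x r}

/-- `W` is a nonempty relatively weakly open subset of the closed unit ball of `X`. -/
def IsRelWeakOpen (W : Set X) : Prop :=
  W.Nonempty ∧ ∃ U : Set X, IsWeaklyOpen X U ∧ W = closedBall (0 : X) 1 ∩ U

/-- The Daugavet index of thickness `𝒯(X)`: the infimum of all `r > 0` such that some nonempty
relatively weakly open subset of the closed unit ball is contained in a closed ball of radius `r`
centered at a point of the unit sphere. -/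
def Tw : ℝ :=
  sInf {r : ℝ | 0 < r ∧ ∃ x : X, ‖x‖ = 1 ∧ ∃ W : Set X, IsRelWeakOpen X W ∧
    W ⊆ closedBall x r}

/-- The convex combination `∑ i, l i • W i` of the sets `W i` (the set of all sums
`∑ i, l i • w i` with `w i ∈ W i`). -/
def comboSet {n : ℕ} (l : Fin n → ℝ) (W : Fin n → Set X) : Set X :=
  {z : X | ∃ w : Fin n → X, (∀ i, w i ∈ W i) ∧ z = ∑ i, l i • w i}

/-- The Daugavet index of thickness `𝒯ᶜᶜ(X)`: the infimum of all `r > 0` such that some convex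
combination of nonempty relatively weakly open subsets of the closed unit ball is contained in a
closed ball of radius `r` centered at a point of the unit sphere. -/
def Tcc : ℝ :=
  sInf {r : ℝ | 0 < r ∧ ∃ x : X, ‖x‖ = 1 ∧ ∃ (n : ℕ) (l : Fin n → ℝ) (W : Fin n → Set X),
    (∀ i, 0 ≤ l i) ∧ (∑ i, l i) = 1 ∧ (∀ i, IsRelWeakOpen X (W i)) ∧
    comboSet X l W ⊆ closedBall x r}

/-- `X` has the Daugavet property: for every `x` in the unit sphere, every `ε > 0` and every
slice `S` of the closed unit ball there exists `y ∈ S` with `‖x - y‖ ≥ 2 - ε`. -/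
def DaugavetProperty : Prop :=
  ∀ x : X, ‖x‖ = 1 → ∀ ε > (0 : ℝ), ∀ S : Set X, IsSlice X S → ∃ y ∈ S, 2 - ε ≤ ‖x - y‖

universe u

set_option maxHeartbeats 1000000 in
theorem stmt_17 (X : Type*) [NormedAddCommGroup X] [NormedSpace ℝ X] [CompleteSpace X]
    [Nontrivial X] (r : ℝ) (hr₀ : 0 ≤ r) (hr₂ : r ≤ 2)
    (h : ∀ δ > (0 : ℝ), ∃ (Y : Type u) (_ : NormedAddCommGroup Y) (_ : NormedSpace ℝ Y)
      (_ : CompleteSpace Y) (L : X ≃L[ℝ] Y),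
        ‖(L : X →L[ℝ] Y)‖ * ‖(L.symm : Y →L[ℝ] X)‖ < 1 + δ ∧ Ts Y = r) :
    r ≤ Ts X := by
  classical
  obtain ⟨x₀, hx₀⟩ := exists_ne (0 : X)
  have hx₀n : (0:ℝ) < ‖x₀‖ := norm_pos_iff.mpr hx₀
  obtain ⟨f₀, hf₀, -⟩ := exists_dual_vector ℝ x₀ (norm_ne_zero_iff.mpr hx₀)
  -- the defining set for `Ts X` is nonempty: `2` belongs to it
  have hmem2 : (2:ℝ) ∈ {r : ℝ | 0 < r ∧ ∃ x : X, ‖x‖ = 1 ∧ ∃ S : Set X,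
      IsSlice X S ∧ S ⊆ closedBall x r} := by
    refine ⟨by norm_num, ‖x₀‖⁻¹ • x₀, ?_, sliceSet X f₀ 1, ⟨f₀, hf₀, 1, one_pos, rfl⟩, ?_⟩
    · rw [norm_smul, norm_inv, norm_norm, inv_mul_cancel₀ (ne_of_gt hx₀n)]
    · intro y hy
      have hy1 : ‖y‖ ≤ 1 := by simpa using mem_closedBall_zero_iff.mp hy.1
      have hxx : ‖‖x₀‖⁻¹ • x₀‖ = 1 := by
        rw [norm_smul, norm_inv, norm_norm, inv_mul_cancel₀ (ne_of_gt hx₀n)]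
      rw [mem_closedBall, dist_eq_norm]
      calc ‖y - ‖x₀‖⁻¹ • x₀‖ ≤ ‖y‖ + ‖‖x₀‖⁻¹ • x₀‖ := norm_sub_le _ _
        _ ≤ 2 := by rw [hxx]; linarith
  refine le_csInf ⟨2, hmem2⟩ ?_
  rintro s ⟨hs0, x, hx, S, ⟨f, hf, α, hα, rfl⟩, hSsub⟩
  refine le_of_forall_pos_le_add ?_
  intro ε hε
  have hs1 : (0:ℝ) < s + 1 := by linarith
  set δ : ℝ := min α (ε / (s + 1)) with hδdef
  have hδ : 0 < δ := lt_min hα (div_pos hε hs1)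
  have hδα : δ ≤ α := min_le_left _ _
  have hδε : δ * (s + 1) ≤ ε := by
    have := min_le_right α (ε / (s + 1))
    calc δ * (s + 1) ≤ (ε / (s + 1)) * (s + 1) := by
          apply mul_le_mul_of_nonneg_right this hs1.le
      _ = ε := by field_simp
  obtain ⟨Y, _, _, _, L, hL, hTsY⟩ := h δ hδ
  set A : ℝ := ‖(L : X →L[ℝ] Y)‖ with hAdef
  set B : ℝ := ‖(L.symm : Y →L[ℝ] X)‖ with hBdef
  have hBkey : ‖x₀‖ ≤ B * ‖L x₀‖ := by
    have := (L.symm : Y →L[ℝ] X).le_opNorm (L x₀)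
    simpa using this
  have hB : 0 < B := by
    by_contra hc
    push_neg at hc
    have h1 : B * ‖L x₀‖ ≤ 0 := mul_nonpos_of_nonpos_of_nonneg hc (norm_nonneg _)
    linarith
  have hAkey : ‖L x₀‖ ≤ A * ‖x₀‖ := (L : X →L[ℝ] Y).le_opNorm x₀
  have hA : 0 < A := by
    by_contra hc
    push_neg at hc
    have h1 : A * ‖x₀‖ ≤ 0 := mul_nonpos_of_nonpos_of_nonneg hc (norm_nonneg _)
    have hLx₀ : L x₀ ≠ 0 := by simpa using hx₀
    have : (0:ℝ) < ‖L x₀‖ := norm_pos_iff.mpr hLx₀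
    linarith
  have hAB : A * B < 1 + δ := hL
  -- build the functional on Y
  set h' : Y →L[ℝ] ℝ := B⁻¹ • (f.comp (L.symm : Y →L[ℝ] X)) with hh'def
  set m : ℝ := ‖h'‖ with hmdef
  have hm_ub : m ≤ 1 := by
    have h1 : ‖f.comp (L.symm : Y →L[ℝ] X)‖ ≤ ‖f‖ * B :=
      ContinuousLinearMap.opNorm_comp_le _ _
    have h2 : m = |B⁻¹| * ‖f.comp (L.symm : Y →L[ℝ] X)‖ := by
      rw [hmdef, hh'def, norm_smul B⁻¹ (f.comp (L.symm : Y →L[ℝ] X)), Real.norm_eq_abs]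
    rw [h2, abs_of_pos (inv_pos.mpr hB)]
    calc B⁻¹ * ‖f.comp (L.symm : Y →L[ℝ] X)‖ ≤ B⁻¹ * (‖f‖ * B) := by
          apply mul_le_mul_of_nonneg_left h1 (inv_pos.mpr hB).le
      _ = 1 := by rw [hf]; field_simp
  have hfv : ∀ v : X, f v = B * h' (L v) := by
    intro v
    simp only [hh'def, ContinuousLinearMap.smul_apply, ContinuousLinearMap.comp_apply,
      ContinuousLinearEquiv.coe_coe, L.symm_apply_apply, smul_eq_mul]
    field_simp
  have hABm : 1 ≤ B * m * A := by
    have hbound : ‖f‖ ≤ B * m * A := by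
      apply ContinuousLinearMap.opNorm_le_bound
      · positivity
      · intro v
        have h1 : |h' (L v)| ≤ m * ‖L v‖ := by
          simpa [Real.norm_eq_abs] using h'.le_opNorm (L v)
        have h2 : ‖L v‖ ≤ A * ‖v‖ := (L : X →L[ℝ] Y).le_opNorm v
        rw [Real.norm_eq_abs, hfv v, abs_mul, abs_of_pos hB]
        calc B * |h' (L v)| ≤ B * (m * ‖L v‖) :=
              mul_le_mul_of_nonneg_left h1 hB.le
          _ ≤ B * (m * (A * ‖v‖)) := by
              apply mul_le_mul_of_nonneg_left _ hB.le
              apply mul_le_mul_of_nonneg_left h2 (norm_nonneg _)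
          _ = B * m * A * ‖v‖ := by ring
    rw [hf] at hbound; exact hbound
  have hm_pos : 0 < m := by nlinarith [norm_nonneg h']
  have hmα : 1 - α < m := by
    nlinarith [mul_pos (show (0:ℝ) < 1 + δ - A * B by linarith) hm_pos]
  set β : ℝ := 1 - (1 - α) / m with hβdef
  have hβ : 0 < β := by
    rw [hβdef, sub_pos, div_lt_one hm_pos]; exact hmα
  set g : Y →L[ℝ] ℝ := m⁻¹ • h' with hgdef
  have hg : ‖g‖ = 1 := by
    rw [hgdef, norm_smul m⁻¹ h', Real.norm_eq_abs, abs_of_pos (inv_pos.mpr hm_pos), ← hmdef]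
    field_simp
  -- the center
  set z : Y := B • L x with hzdef
  have hz1 : 1 ≤ ‖z‖ := by
    have h1 : ‖x‖ ≤ B * ‖L x‖ := by
      have := (L.symm : Y →L[ℝ] X).le_opNorm (L x)
      simpa using this
    have h2 : ‖z‖ = B * ‖L x‖ := by
      rw [hzdef, norm_smul, Real.norm_eq_abs, abs_of_pos hB]
    rw [h2, ← hx]; exact h1
  have hz2 : ‖z‖ < 1 + δ := by
    have h2 : ‖z‖ = B * ‖L x‖ := by
      rw [hzdef, norm_smul, Real.norm_eq_abs, abs_of_pos hB]
    have h3 : ‖L x‖ ≤ A * ‖x‖ := (L : X →L[ℝ] Y).le_opNorm x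
    rw [hx, mul_one] at h3
    calc ‖z‖ = B * ‖L x‖ := h2
      _ ≤ B * A := mul_le_mul_of_nonneg_left h3 hB.le
      _ < 1 + δ := by linarith [hAB]
  set z' : Y := ‖z‖⁻¹ • z with hz'def
  have hznepos : (0:ℝ) < ‖z‖ := by linarith
  have hz'norm : ‖z'‖ = 1 := by
    rw [hz'def, norm_smul, norm_inv, norm_norm, inv_mul_cancel₀ (ne_of_gt hznepos)]
  have hzz' : ‖z - z'‖ ≤ δ := by
    have h1 : z - z' = (1 - ‖z‖⁻¹) • z := by
      rw [hz'def, sub_smul, one_smul]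
    have h2 : (0:ℝ) ≤ 1 - ‖z‖⁻¹ := by
      have : ‖z‖⁻¹ ≤ 1 := by
        rw [inv_le_one_iff₀]; right; exact hz1
      linarith
    rw [h1, norm_smul, Real.norm_eq_abs, abs_of_nonneg h2]
    have : (1 - ‖z‖⁻¹) * ‖z‖ = ‖z‖ - 1 := by
      field_simp
    rw [this]; linarith
  -- the radius
  set ρ : ℝ := (1 + δ) * s + δ with hρdef
  have hρpos : 0 < ρ := by positivity
  -- subset property of the slice in Y
  have hsubset : sliceSet Y g β ⊆ closedBall z' ρ := by
    rintro y ⟨hyb, hyg⟩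
    have hy1 : ‖y‖ ≤ 1 := mem_closedBall_zero_iff.mp hyb
    set u : X := B⁻¹ • L.symm y with hudef
    have hu1 : ‖u‖ ≤ 1 := by
      have h1 : ‖L.symm y‖ ≤ B * ‖y‖ := (L.symm : Y →L[ℝ] X).le_opNorm y
      have h2 : ‖u‖ = B⁻¹ * ‖L.symm y‖ := by
        rw [hudef, norm_smul, Real.norm_eq_abs, abs_of_pos (inv_pos.mpr hB)]
      rw [h2]
      calc B⁻¹ * ‖L.symm y‖ ≤ B⁻¹ * (B * ‖y‖) :=
            mul_le_mul_of_nonneg_left h1 (inv_pos.mpr hB).le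
        _ = ‖y‖ := by field_simp
        _ ≤ 1 := hy1
    have hgy : g y = m⁻¹ * h' y := by
      rw [hgdef]; simp [smul_eq_mul]
    have hh'y : 1 - α < h' y := by
      have h1 : (1 - α) / m < m⁻¹ * h' y := by
        rw [← hgy]
        have : 1 - β = (1 - α) / m := by rw [hβdef]; ring
        linarith [hyg, this ▸ hyg]
      have h2 : m⁻¹ * (1 - α) < m⁻¹ * h' y := by
        rw [inv_mul_eq_div]; exact h1
      exact (mul_lt_mul_iff_right₀ (inv_pos.mpr hm_pos)).mp h2
    have hfu : 1 - α < f u := by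
      have : f u = h' y := by
        rw [hudef]
        simp only [map_smul, hh'def, ContinuousLinearMap.smul_apply,
          ContinuousLinearMap.comp_apply, ContinuousLinearEquiv.coe_coe, smul_eq_mul]
      rw [this]; exact hh'y
    have hux : u ∈ closedBall x s := hSsub ⟨mem_closedBall_zero_iff.mpr hu1, hfu⟩
    have huxs : ‖u - x‖ ≤ s := by
      rw [mem_closedBall, dist_eq_norm] at hux; exact hux
    have hyz : ‖y - z‖ ≤ (1 + δ) * s := by
      have hyu : y = B • L u := by
        rw [hudef]
        simp only [map_smul, smul_smul]
        rw [mul_inv_cancel₀ (ne_of_gt hB), one_smul, L.apply_symm_apply]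
      have h1 : y - z = B • L (u - x) := by
        rw [hyu, hzdef, ← smul_sub, ← map_sub]
      have h2 : ‖y - z‖ = B * ‖L (u - x)‖ := by
        rw [h1, norm_smul, Real.norm_eq_abs, abs_of_pos hB]
      have h3 : ‖L (u - x)‖ ≤ A * ‖u - x‖ := (L : X →L[ℝ] Y).le_opNorm (u - x)
      rw [h2]
      calc B * ‖L (u - x)‖ ≤ B * (A * ‖u - x‖) := mul_le_mul_of_nonneg_left h3 hB.le
        _ = A * B * ‖u - x‖ := by ring
        _ ≤ (1 + δ) * s := by nlinarith [norm_nonneg (u - x), mul_pos hA hB]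
    rw [mem_closedBall, dist_eq_norm]
    calc ‖y - z'‖ ≤ ‖y - z‖ + ‖z - z'‖ := by
          have : y - z' = (y - z) + (z - z') := by abel
          rw [this]; exact norm_add_le _ _
      _ ≤ (1 + δ) * s + δ := add_le_add hyz hzz'
  -- conclude
  have hρmem : ρ ∈ {r : ℝ | 0 < r ∧ ∃ x : Y, ‖x‖ = 1 ∧ ∃ S : Set Y,
      IsSlice Y S ∧ S ⊆ closedBall x r} :=
    ⟨hρpos, z', hz'norm, sliceSet Y g β, ⟨g, hg, β, hβ, rfl⟩, hsubset⟩
  have hTle : Ts Y ≤ ρ := by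
    apply csInf_le ⟨0, ?_⟩ hρmem
    rintro t ⟨ht, -⟩
    exact ht.le
  rw [hTsY] at hTle
  calc r ≤ ρ := hTle
    _ = s + (δ * (s + 1)) := by rw [hρdef]; ring
    _ ≤ s + ε := by linarith
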